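/- Let W₁, W₂ : H₁ → H₂ be isometries and σ : A → B(H₁), π : A → B(H₂) representations such that Wⱼ*π(a)Wⱼ - σ(a) ∈ K(H₁) for all a ∈ A and j = 1, 2, and [WⱼWⱼ*, π(a)] ∈ K(H₂) for all a. Then [W₁W₂*, π(a)] ∈ K(H₂) for all a ∈ A. -/
import Mathlib

open ContinuousLinearMap

/-- Let `W₁, W₂ : H₁ → H₂` be isometries, `π` a representation of a C*-algebra `A` on
`H₂` and `σ` a representation on `H₁` such that `Wⱼ*π(a)Wⱼ - σ(a)` is compact and
`[WⱼWⱼ*, π(a)]` is compact for all `a` and `j = 1, 2`. Then `[W₁W₂*, π(a)]` is compact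
for all `a ∈ A`. -/
theorem mixed_range_operator_commutes_mod_compacts
    {H₁ H₂ : Type*}
    [NormedAddCommGroup H₁] [InnerProductSpace ℂ H₁] [CompleteSpace H₁]
    [NormedAddCommGroup H₂] [InnerProductSpace ℂ H₂] [CompleteSpace H₂]
    {A : Type*} [NormedRing A] [StarRing A] [CStarRing A] [NormedAlgebra ℂ A]
    [StarModule ℂ A] [CompleteSpace A]
    (π : A →⋆ₐ[ℂ] (H₂ →L[ℂ] H₂)) (σ : A →⋆ₐ[ℂ] (H₁ →L[ℂ] H₁))
    (W₁ W₂ : H₁ →L[ℂ] H₂)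
    (hW₁ : adjoint W₁ ∘L W₁ = 1) (hW₂ : adjoint W₂ ∘L W₂ = 1)
    (hint₁ : ∀ a : A, IsCompactOperator ⇑(adjoint W₁ ∘L π a ∘L W₁ - σ a))
    (hint₂ : ∀ a : A, IsCompactOperator ⇑(adjoint W₂ ∘L π a ∘L W₂ - σ a))
    (hcomm₁ : ∀ a : A, IsCompactOperator
      ⇑((W₁ ∘L adjoint W₁) * π a - π a * (W₁ ∘L adjoint W₁)))
    (hcomm₂ : ∀ a : A, IsCompactOperator
      ⇑((W₂ ∘L adjoint W₂) * π a - π a * (W₂ ∘L adjoint W₂))) :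
    ∀ a : A, IsCompactOperator
      ⇑((W₁ ∘L adjoint W₂) * π a - π a * (W₁ ∘L adjoint W₂)) := by
  intro a
  have h₁ : ∀ y, adjoint W₁ (W₁ y) = y := fun y => by
    simpa using ContinuousLinearMap.ext_iff.mp hW₁ y
  have h₂ : ∀ y, adjoint W₂ (W₂ y) = y := fun y => by
    simpa using ContinuousLinearMap.ext_iff.mp hW₂ y
  have key : ((W₁ ∘L adjoint W₂) * π a - π a * (W₁ ∘L adjoint W₂)) =
      (W₁ ∘L adjoint W₂) ∘L ((W₂ ∘L adjoint W₂) * π a - π a * (W₂ ∘L adjoint W₂))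
      + (W₁ ∘L ((adjoint W₂ ∘L π a ∘L W₂ - σ a) - (adjoint W₁ ∘L π a ∘L W₁ - σ a)))
          ∘L adjoint W₂
      + ((W₁ ∘L adjoint W₁) * π a - π a * (W₁ ∘L adjoint W₁)) ∘L (W₁ ∘L adjoint W₂) := by
    ext x
    simp [ContinuousLinearMap.mul_apply, map_sub, h₁, h₂]
  rw [key]
  exact ((((hcomm₂ a).clm_comp (W₁ ∘L adjoint W₂)).add
    ((((hint₂ a).sub (hint₁ a)).clm_comp W₁).comp_clm (adjoint W₂))).add
    ((hcomm₁ a).comp_clm (W₁ ∘L adjoint W₂)))
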